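/- Let ℓ(s) = 1 + |log s| and ℓℓ(s) = 1 + log ℓ(s). For q ∈ [1,∞], β > 1/q', one has ‖s^{-1/q'} ℓ(s)^{-1/q'} ℓℓ(s)^{-β}‖_{L^{q'}(0,r)} ≈ ℓℓ(r)^{1/q' - β} near 0, with constants independent of r. -/

import Mathlib

open MeasureTheory Set Filter Topology
open scoped ENNReal

noncomputable def ell (s : ℝ) : ℝ := 1 + |Real.log s|
noncomputable def ellell (s : ℝ) : ℝ := 1 + Real.log (ell s)

noncomputable def myL (s : ℝ) : ℝ := 1 - Real.log s
noncomputable def myLL (s : ℝ) : ℝ := 1 + Real.log (myL s)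

lemma myL_one_le {s : ℝ} (h0 : 0 < s) (h1 : s ≤ 1) : 1 ≤ myL s := by
  have := Real.log_nonpos h0.le h1
  unfold myL; linarith

lemma myLL_one_le {s : ℝ} (h0 : 0 < s) (h1 : s ≤ 1) : 1 ≤ myLL s := by
  have h := Real.log_nonneg (myL_one_le h0 h1)
  unfold myLL; linarith

lemma ell_eq {s : ℝ} (h0 : 0 < s) (h1 : s ≤ 1) : ell s = myL s := by
  rw [ell, myL, abs_of_nonpos (Real.log_nonpos h0.le h1)]; ring

lemma ellell_eq {s : ℝ} (h0 : 0 < s) (h1 : s ≤ 1) : ellell s = myLL s := by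
  rw [ellell, ell_eq h0 h1, myLL]

lemma myLL_anti {a b : ℝ} (h0 : 0 < a) (hab : a ≤ b) (hb : b ≤ 1) : myLL b ≤ myLL a := by
  have ha1 : a ≤ 1 := hab.trans hb
  have hL1 : 1 ≤ myL b := myL_one_le (h0.trans_le hab) hb
  have hlog : Real.log a ≤ Real.log b := Real.log_le_log h0 hab
  have hL : myL b ≤ myL a := by unfold myL; linarith
  have := Real.log_le_log (by linarith) hL
  unfold myLL; linarith

lemma rpow_neg_anti {a b β : ℝ} (hβ : 0 ≤ β) (ha : 0 < a) (hab : a ≤ b) :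
    b ^ (-β) ≤ a ^ (-β) := by
  rw [Real.rpow_neg (by linarith), Real.rpow_neg ha.le]
  have h1 : 0 < a ^ β := Real.rpow_pos_of_pos ha β
  have h2 : a ^ β ≤ b ^ β := Real.rpow_le_rpow ha.le hab hβ
  exact inv_anti₀ h1 h2

lemma myLL_half {r : ℝ} (h0 : 0 < r) (h1 : r ≤ 1) : myLL (r / 2) ≤ 2 * myLL r := by
  have hlr : Real.log (r / 2) = Real.log r - Real.log 2 := Real.log_div h0.ne' two_ne_zero
  have hlogr : Real.log r ≤ 0 := Real.log_nonpos h0.le h1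
  have h2a : (0:ℝ) < Real.log 2 := Real.log_pos one_lt_two
  have h2b : Real.log 2 ≤ 1 := by
    have := Real.log_two_lt_d9; linarith
  have hL1 : (1:ℝ) ≤ myL r := myL_one_le h0 h1
  have hLh : myL (r / 2) ≤ 2 * myL r := by unfold myL; rw [hlr]; linarith
  have hLhpos : 0 < myL (r / 2) := by unfold myL; rw [hlr]; linarith
  have hlog2 := Real.log_le_log hLhpos hLh
  rw [Real.log_mul two_ne_zero (by linarith : myL r ≠ 0)] at hlog2
  have hlogL : 0 ≤ Real.log (myL r) := Real.log_nonneg hL1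
  unfold myLL; linarith

lemma hasDerivAt_myLL {s : ℝ} (h0 : 0 < s) (h1 : s < 1) :
    HasDerivAt myLL (-s⁻¹ / myL s) s := by
  have hlog : HasDerivAt Real.log s⁻¹ s := Real.hasDerivAt_log h0.ne'
  have hL : HasDerivAt (fun x : ℝ => 1 - Real.log x) (-s⁻¹) s := by
    simpa using hlog.const_sub (1:ℝ)
  have hLne : myL s ≠ 0 := by
    have := myL_one_le h0 h1.le; intro h; rw [h] at this; linarith
  have h := (hL.log hLne).const_add 1
  exact h

lemma continuousOn_myF (γ : ℝ) :
    ContinuousOn (fun s : ℝ => s⁻¹ * (myL s)⁻¹ * myLL s ^ (-γ)) (Ioo (0:ℝ) 1) := by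
  have h0 : ∀ x ∈ Ioo (0:ℝ) 1, x ≠ 0 := fun x hx => hx.1.ne'
  have hLc : ContinuousOn myL (Ioo (0:ℝ) 1) :=
    continuousOn_const.sub (Real.continuousOn_log.mono fun x hx => h0 x hx)
  have hLne : ∀ x ∈ Ioo (0:ℝ) 1, myL x ≠ 0 := fun x hx => by
    have := myL_one_le hx.1 hx.2.le; intro h; rw [h] at this; linarith
  have hLLc : ContinuousOn myLL (Ioo (0:ℝ) 1) :=
    continuousOn_const.add (hLc.log hLne)
  exact ((continuousOn_id.inv₀ h0).mul (hLc.inv₀ hLne)).mul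
    (hLLc.rpow_const fun x hx => Or.inl (by
      have := myLL_one_le hx.1 hx.2.le
      intro h; rw [h] at this; linarith))

lemma hasDerivAt_myG {γ : ℝ} (hγ : 1 < γ) {s : ℝ} (h0 : 0 < s) (h1 : s < 1) :
    HasDerivAt (fun s : ℝ => (γ - 1)⁻¹ * myLL s ^ (1 - γ))
      (s⁻¹ * (myL s)⁻¹ * myLL s ^ (-γ)) s := by
  have hLL1 : 1 ≤ myLL s := myLL_one_le h0 h1.le
  have hLLpos : (0:ℝ) < myLL s := by linarith
  have hL1 : 1 ≤ myL s := myL_one_le h0 h1.le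
  have hd := ((hasDerivAt_myLL h0 h1).rpow_const (p := 1 - γ) (Or.inl hLLpos.ne')).const_mul
    ((γ - 1)⁻¹)
  convert hd using 1
  · rfl
  · rfl
  have he : (1 - γ - 1) = -γ := by ring
  rw [he]
  have hsne : s ≠ 0 := h0.ne'
  have hLne : myL s ≠ 0 := by linarith
  have hγne : γ - 1 ≠ 0 := by linarith
  field_simp
  ring

lemma key_lintegral {γ : ℝ} (hγ : 1 < γ) {r : ℝ} (hr0 : 0 < r) (hr1 : r < 1) :
    ∫⁻ s in Ioo (0:ℝ) r, ENNReal.ofReal (s⁻¹ * (myL s)⁻¹ * myLL s ^ (-γ)) =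
      ENNReal.ofReal ((γ - 1)⁻¹ * myLL r ^ (1 - γ)) := by
  set F : ℝ → ℝ := fun s => s⁻¹ * (myL s)⁻¹ * myLL s ^ (-γ) with hF
  set G : ℝ → ℝ := fun s => (γ - 1)⁻¹ * myLL s ^ (1 - γ) with hG
  set ν := volume.withDensity (fun s => ENNReal.ofReal (F s)) with hνdef
  have hνapp : ∀ a b : ℝ, ν (Ioo a b) = ∫⁻ s in Ioo a b, ENNReal.ofReal (F s) :=
    fun a b => withDensity_apply _ measurableSet_Ioo
  set u : ℕ → ℝ := fun n => r / (n + 2) with hu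
  have hupos : ∀ n, 0 < u n := fun n => div_pos hr0 (by positivity)
  have hultr : ∀ n, u n < r := fun n => by
    rw [hu, div_lt_iff₀ (by positivity)]
    nlinarith [hr0]
  have hIcc : ∀ n, Icc (u n) r ⊆ Ioo (0:ℝ) 1 := fun n x hx =>
    ⟨lt_of_lt_of_le (hupos n) hx.1, lt_of_le_of_lt hx.2 hr1⟩
  have hcF : ContinuousOn F (Ioo (0:ℝ) 1) := continuousOn_myF γ
  have hmono : Monotone fun n : ℕ => Ioo (u n) r := by
    intro m n h
    refine Ioo_subset_Ioo ?_ le_rfl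
    rw [hu]
    have h2 : ((m:ℝ) + 2) ≤ (n:ℝ) + 2 := by exact_mod_cast by linarith
    exact div_le_div_of_nonneg_left hr0.le (by positivity) h2
  have hunion : ⋃ n, Ioo (u n) r = Ioo (0:ℝ) r := by
    apply Subset.antisymm
    · exact iUnion_subset fun n => Ioo_subset_Ioo (hupos n).le le_rfl
    · intro s hs
      obtain ⟨n, hn⟩ := exists_nat_gt (r / s)
      refine mem_iUnion.2 ⟨n, ⟨?_, hs.2⟩⟩
      rw [hu]
      rw [div_lt_iff₀ (by positivity)]
      rw [div_lt_iff₀ hs.1] at hn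
      nlinarith [hs.1]
  have hval : ∀ n, ν (Ioo (u n) r) = ENNReal.ofReal (G r - G (u n)) := by
    intro n
    have hle : u n ≤ r := (hultr n).le
    have hicc := hIcc n
    have hint : IntegrableOn F (Ioo (u n) r) :=
      ((hcF.mono hicc).integrableOn_compact isCompact_Icc).mono_set Ioo_subset_Icc_self
    have hnn : 0 ≤ᵐ[volume.restrict (Ioo (u n) r)] F := by
      filter_upwards [ae_restrict_mem measurableSet_Ioo] with x hx
      have hx' : x ∈ Ioo (0:ℝ) 1 := ⟨(hupos n).trans hx.1, hx.2.trans hr1⟩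
      have h1 := myL_one_le hx'.1 hx'.2.le
      have h2 := myLL_one_le hx'.1 hx'.2.le
      exact mul_nonneg (mul_nonneg (inv_nonneg.2 hx'.1.le) (inv_nonneg.2 (by linarith)))
        (Real.rpow_nonneg (by linarith) _)
    rw [hνapp, ← ofReal_integral_eq_lintegral_ofReal hint hnn]
    congr 1
    rw [← integral_Ioc_eq_integral_Ioo, ← intervalIntegral.integral_of_le hle]
    apply intervalIntegral.integral_eq_sub_of_hasDerivAt
    · intro x hx
      rw [uIcc_of_le hle] at hx
      have hx' := hicc hx
      exact hasDerivAt_myG hγ hx'.1 hx'.2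
    · apply ContinuousOn.intervalIntegrable
      rw [uIcc_of_le hle]
      exact hcF.mono hicc
  have hulim : Tendsto u atTop (𝓝[>] (0:ℝ)) := by
    rw [tendsto_nhdsWithin_iff]
    constructor
    · have h1 : Tendsto (fun n : ℕ => (n:ℝ) + 2) atTop atTop :=
        tendsto_atTop_add_const_right _ _ tendsto_natCast_atTop_atTop
      have h2 := h1.inv_tendsto_atTop
      have h3 := h2.const_mul r
      simpa [hu, div_eq_mul_inv] using h3
    · exact Eventually.of_forall fun n => hupos n
  have hLLtop : Tendsto myLL (𝓝[>] (0:ℝ)) atTop := by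
    have h1 : Tendsto (fun s : ℝ => -Real.log s) (𝓝[>] (0:ℝ)) atTop :=
      tendsto_neg_atBot_atTop.comp Real.tendsto_log_nhdsGT_zero
    have h2 : Tendsto myL (𝓝[>] (0:ℝ)) atTop := by
      have := tendsto_atTop_add_const_left _ (1:ℝ) h1
      apply this.congr
      intro s; unfold myL; ring
    have h3 := Real.tendsto_log_atTop.comp h2
    have := tendsto_atTop_add_const_left _ (1:ℝ) h3
    apply this.congr
    intro s; unfold myLL; rfl
  have hG0 : Tendsto (fun n => G (u n)) atTop (𝓝 0) := by
    have h1 : Tendsto (fun n => myLL (u n)) atTop atTop := hLLtop.comp hulim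
    have h2 : Tendsto (fun n => myLL (u n) ^ (-(γ - 1))) atTop (𝓝 0) :=
      (tendsto_rpow_neg_atTop (by linarith)).comp h1
    have h3 := h2.const_mul ((γ - 1)⁻¹)
    rw [mul_zero] at h3
    apply h3.congr
    intro n
    rw [hG]
    congr 1
    ring_nf
  have hlim1 : Tendsto (fun n => ν (Ioo (u n) r)) atTop (𝓝 (ν (Ioo 0 r))) := by
    have := tendsto_measure_iUnion_atTop (μ := ν) hmono
    rwa [hunion] at this
  have hlim2 : Tendsto (fun n => ν (Ioo (u n) r)) atTop (𝓝 (ENNReal.ofReal (G r))) := by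
    simp only [hval]
    have h1 : Tendsto (fun n => G r - G (u n)) atTop (𝓝 (G r - 0)) :=
      tendsto_const_nhds.sub hG0
    rw [sub_zero] at h1
    exact (ENNReal.continuous_ofReal.tendsto _).comp h1
  have := tendsto_nhds_unique hlim1 hlim2
  rw [← hνapp, this]

/-- For `β > 1/q'`: `‖s^{-1/q'} ℓ(s)^{-1/q'} ℓℓ(s)^{-β}‖_{L^{q'}(0,r)} ≈ ℓℓ(r)^{1/q'-β}`
near `0`, with constants independent of `r`. -/
theorem stmt9 (q q' : ℝ≥0∞) (hq : 1 ≤ q) (hconj : 1 / q + 1 / q' = 1)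
    (β : ℝ) (hβ : (1 / q').toReal < β) :
    ∃ c C r₀ : ℝ, 0 < c ∧ 0 < C ∧ 0 < r₀ ∧
      ∀ r ∈ Set.Ioo (0 : ℝ) r₀,
        ENNReal.ofReal (c * ellell r ^ ((1 / q').toReal - β)) ≤
            eLpNorm (fun s : ℝ =>
                s ^ (-(1 / q').toReal) * ell s ^ (-(1 / q').toReal) * ellell s ^ (-β))
              q' (volume.restrict (Set.Ioo (0 : ℝ) r)) ∧
          eLpNorm (fun s : ℝ =>
                s ^ (-(1 / q').toReal) * ell s ^ (-(1 / q').toReal) * ellell s ^ (-β))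
              q' (volume.restrict (Set.Ioo (0 : ℝ) r)) ≤
            ENNReal.ofReal (C * ellell r ^ ((1 / q').toReal - β)) := by
  have hq'0 : q' ≠ 0 := by
    rintro rfl
    simp at hconj
  rcases eq_or_ne q' ∞ with hq' | hq'
  · -- q' = ∞ : essential supremum case
    subst hq'
    have h0 : ((1:ℝ≥0∞) / ∞).toReal = 0 := by simp
    rw [h0] at hβ
    refine ⟨(2:ℝ) ^ (-β), 1, 1, by positivity, one_pos, one_pos, ?_⟩
    intro r hr
    have hr0 := hr.1
    have hr1 := hr.2
    simp only [h0, neg_zero, Real.rpow_zero, one_mul, zero_sub]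
    rw [eLpNorm_exponent_top]
    set g : ℝ → ℝ := fun s => ellell s ^ (-β) with hg
    have hLLr1 : 1 ≤ myLL r := myLL_one_le hr0 hr1.le
    constructor
    · -- lower bound
      by_contra hcon
      push_neg at hcon
      rw [eLpNormEssSup] at hcon
      have hae := ae_lt_of_essSup_lt hcon
      rw [ae_restrict_iff' measurableSet_Ioo] at hae
      have hsub : Ioo (r/2) r ⊆ {x : ℝ | ¬ (x ∈ Ioo (0:ℝ) r →
          (‖g x‖₊ : ℝ≥0∞) < ENNReal.ofReal ((2:ℝ) ^ (-β) * ellell r ^ (-β)))} := by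
        intro x hx
        simp only [mem_setOf_eq, Classical.not_imp, not_lt]
        have hx0 : 0 < x := lt_trans (by linarith) hx.1
        refine ⟨⟨hx0, hx.2⟩, ?_⟩
        have hx1 : x ≤ 1 := le_of_lt (hx.2.trans hr1)
        have h1 : myLL x ≤ myLL (r/2) := myLL_anti (by linarith) hx.1.le (by linarith)
        have h2 : myLL x ≤ 2 * myLL r := h1.trans (myLL_half hr0 hr1.le)
        have h3 : (2 * myLL r) ^ (-β) ≤ myLL x ^ (-β) :=
          rpow_neg_anti hβ.le (by linarith [myLL_one_le hx0 hx1]) h2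
        rw [Real.mul_rpow (by norm_num) (by linarith)] at h3
        have hgx : g x = myLL x ^ (-β) := by rw [hg]; simp only; rw [ellell_eq hx0 hx1]
        have hgnn : 0 ≤ g x := by rw [hgx]; exact Real.rpow_nonneg (by linarith [myLL_one_le hx0 hx1]) _
        rw [← enorm_eq_nnnorm, ← ofReal_norm, Real.norm_eq_abs, abs_of_nonneg hgnn]
        apply ENNReal.ofReal_le_ofReal
        rw [hgx, ellell_eq hr0 hr1.le]
        exact h3
      have hnull : volume {x : ℝ | ¬ (x ∈ Ioo (0:ℝ) r →
          (‖g x‖₊ : ℝ≥0∞) < ENNReal.ofReal ((2:ℝ) ^ (-β) * ellell r ^ (-β)))} = 0 := by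
        rw [← ae_iff] at *
        exact hae
      have := measure_mono_null hsub hnull
      rw [Real.volume_Ioo] at this
      have : ENNReal.ofReal (r - r/2) ≠ 0 := by
        simp only [ne_eq, ENNReal.ofReal_eq_zero, not_le]
        linarith
      exact this ‹ENNReal.ofReal (r - r/2) = 0›
    · -- upper bound
      apply eLpNormEssSup_le_of_ae_bound (C := ellell r ^ (-β))
      rw [ae_restrict_iff' measurableSet_Ioo]
      apply Eventually.of_forall
      intro x hx
      have hx0 := hx.1
      have hx1 : x ≤ 1 := le_of_lt (hx.2.trans hr1)
      have h1 : myLL r ≤ myLL x := myLL_anti hx0 hx.2.le hr1.le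
      have h2 : myLL x ^ (-β) ≤ myLL r ^ (-β) :=
        rpow_neg_anti hβ.le (by linarith [myLL_one_le hx0 hx1]) h1
      have hgx : g x = myLL x ^ (-β) := by rw [hg]; simp only; rw [ellell_eq hx0 hx1]
      rw [Real.norm_eq_abs, hgx, abs_of_nonneg (Real.rpow_nonneg (by linarith [myLL_one_le hx0 hx1]) _), ellell_eq hr0 hr1.le]
      exact h2
  · -- finite case
    set t := q'.toReal with ht
    have htpos : 0 < t := ENNReal.toReal_pos hq'0 hq'
    have h01 : (1 / q').toReal = t⁻¹ := by rw [one_div, ENNReal.toReal_inv]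
    rw [h01] at hβ
    set γ := β * t with hγdef
    have hγ : 1 < γ := by
      rw [hγdef]
      rw [inv_eq_one_div, div_lt_iff₀ htpos] at hβ
      linarith
    have hγ1 : (0:ℝ) < γ - 1 := by linarith
    refine ⟨((γ - 1)⁻¹) ^ t⁻¹, ((γ - 1)⁻¹) ^ t⁻¹, 1, by positivity, by positivity, one_pos, ?_⟩
    intro r hr
    have hr0 := hr.1
    have hr1 := hr.2
    have hLLr1 : 1 ≤ myLL r := myLL_one_le hr0 hr1.le
    have heq : eLpNorm (fun s : ℝ =>
          s ^ (-(1 / q').toReal) * ell s ^ (-(1 / q').toReal) * ellell s ^ (-β))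
        q' (volume.restrict (Set.Ioo (0 : ℝ) r)) =
        ENNReal.ofReal (((γ - 1)⁻¹) ^ t⁻¹ * ellell r ^ ((1 / q').toReal - β)) := by
      rw [eLpNorm_eq_lintegral_rpow_enorm_toReal hq'0 hq']
      have hcongr : ∫⁻ x in Ioo (0:ℝ) r, (‖(fun s : ℝ =>
            s ^ (-(1 / q').toReal) * ell s ^ (-(1 / q').toReal) * ellell s ^ (-β)) x‖₊ : ℝ≥0∞)
              ^ q'.toReal =
          ∫⁻ x in Ioo (0:ℝ) r, ENNReal.ofReal (x⁻¹ * (myL x)⁻¹ * myLL x ^ (-γ)) := by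
        apply lintegral_congr_ae
        filter_upwards [ae_restrict_mem measurableSet_Ioo] with x hx
        have hx0 := hx.1
        have hx1 : x ≤ 1 := le_of_lt (hx.2.trans hr1)
        have hL1 := myL_one_le hx0 hx1
        have hLL1 := myLL_one_le hx0 hx1
        simp only [h01, ell_eq hx0 hx1, ellell_eq hx0 hx1]
        have hfpos : 0 < x ^ (-t⁻¹) * myL x ^ (-t⁻¹) * myLL x ^ (-β) := by
          apply mul_pos (mul_pos (Real.rpow_pos_of_pos hx0 _)
            (Real.rpow_pos_of_pos (by linarith) _)) (Real.rpow_pos_of_pos (by linarith) _)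
        rw [← enorm_eq_nnnorm, ← ofReal_norm, Real.norm_eq_abs, abs_of_pos hfpos,
          ENNReal.ofReal_rpow_of_pos hfpos]
        congr 1
        rw [Real.mul_rpow (by positivity) (by positivity),
          Real.mul_rpow (by positivity) (by positivity),
          ← Real.rpow_mul hx0.le, ← Real.rpow_mul (by linarith : (0:ℝ) ≤ myL x),
          ← Real.rpow_mul (by linarith : (0:ℝ) ≤ myLL x)]
        rw [show -t⁻¹ * t = (-1 : ℝ) by field_simp, show -β * t = -γ by rw [hγdef]; ring,
          Real.rpow_neg_one, Real.rpow_neg_one]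
      erw [hcongr]
      rw [key_lintegral hγ hr0 hr1]
      have hGpos : 0 < (γ - 1)⁻¹ * myLL r ^ (1 - γ) := by
        apply mul_pos (by positivity) (Real.rpow_pos_of_pos (by linarith) _)
      rw [one_div, ← ht, ENNReal.ofReal_rpow_of_pos hGpos]
      congr 1
      rw [Real.mul_rpow (by positivity) (by positivity),
        ← Real.rpow_mul (by linarith : (0:ℝ) ≤ myLL r), h01, ellell_eq hr0 hr1.le]
      congr 1
      rw [hγdef]
      field_simp
    rw [heq]
    exact ⟨le_rfl, le_rfl⟩
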